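/- arXiv:1209.2547 — 4 statements merged into one kernel-verified Lean document; each statement's English description precedes it below -/
import Mathlib

section
/- Let S : ℂ → ℂ be differentiable (holomorphic) on the strip S(0,π) = {ζ ∈ ℂ : 0 < Im ζ < π} and suppose S(iπ − ζ) = S(ζ) for all ζ ∈ S(0,π) (crossing symmetry). Then there exists a function φ : ℂ → ℂ that is differentiable on the upper half plane ℍ = {z : Im z > 0} and satisfies φ(sinh ζ) = S(ζ) for all ζ ∈ S(0,π). -/
open Complex Filter Set
open scoped Topology

namespace CrossingAux

noncomputable section

def strip : Set ℂ := {ζ : ℂ | 0 < ζ.im ∧ ζ.im < Real.pi}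

lemma isOpen_strip : IsOpen strip :=
  (isOpen_Ioo (a := (0:ℝ)) (b := Real.pi)).preimage Complex.continuous_im

lemma isOpen_upper : IsOpen {z : ℂ | 0 < z.im} :=
  (isOpen_Ioi (a := (0:ℝ))).preimage Complex.continuous_im

lemma sinh_zero_int {v : ℂ} (h : Complex.sinh v = 0) : ∃ k : ℤ, v = ((k : ℂ) * Real.pi) * I := by
  have h1 : Complex.sin (v * I) = 0 := by rw [Complex.sin_mul_I, h, zero_mul]
  obtain ⟨k, hk⟩ := Complex.sin_eq_zero_iff.mp h1
  refine ⟨-k, ?_⟩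
  have h2 : v * I * (-I) = ((k:ℂ) * Real.pi) * (-I) := by rw [hk]
  rw [mul_assoc] at h2
  simp only [mul_neg, Complex.I_mul_I, neg_neg, mul_one] at h2
  rw [h2]; push_cast; ring

lemma cosh_zero_int {v : ℂ} (h : Complex.cosh v = 0) :
    ∃ k : ℤ, v = (-(2 * (k:ℂ) + 1) * (Real.pi / 2)) * I := by
  have h1 : Complex.cos (v * I) = 0 := by rw [Complex.cos_mul_I, h]
  obtain ⟨k, hk⟩ := Complex.cos_eq_zero_iff.mp h1
  refine ⟨k, ?_⟩
  have h2 : v * I * (-I) = ((2 * (k:ℂ) + 1) * Real.pi / 2) * (-I) := by rw [hk]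
  rw [mul_assoc] at h2
  simp only [mul_neg, Complex.I_mul_I, neg_neg, mul_one] at h2
  rw [h2]; ring

/-- a point of the strip where cosh vanishes is iπ/2 -/
lemma strip_cosh_zero {v : ℂ} (hv : v ∈ strip) (h : Complex.cosh v = 0) :
    v = ((Real.pi / 2 : ℝ) : ℂ) * I := by
  obtain ⟨h0, h1⟩ := hv
  obtain ⟨k, hk⟩ := cosh_zero_int h
  have him : v.im = -(2 * (k:ℝ) + 1) * (Real.pi / 2) := by
    rw [hk]; simp [Complex.mul_I_im]
  rw [him] at h0 h1
  have hπ := Real.pi_pos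
  have hk1 : (-2 : ℝ) < 2 * (k:ℝ) + 1 := by nlinarith
  have hk2 : (2 * (k:ℝ) + 1) < 0 := by nlinarith
  have hk1' : (-2 : ℤ) < 2 * k + 1 := by exact_mod_cast hk1
  have hk2' : (2 * k + 1 : ℤ) < 0 := by exact_mod_cast hk2
  have hke : k = -1 := by omega
  subst hke
  rw [hk]; push_cast; ring

/-- fibers of sinh on the strip -/
lemma sinh_fiber {a b : ℂ} (ha : a ∈ strip) (hb : b ∈ strip)
    (h : Complex.sinh a = Complex.sinh b) : b = a ∨ b = (Real.pi : ℂ) * I - a := by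
  obtain ⟨ha1, ha2⟩ := ha
  obtain ⟨hb1, hb2⟩ := hb
  set u := (a + b) / 2 with hu
  set v := (a - b) / 2 with hv
  have hau : a = u + v := by rw [hu, hv]; ring
  have hbu : b = u - v := by rw [hu, hv]; ring
  have key : 2 * Complex.cosh u * Complex.sinh v = 0 := by
    have h3 : Complex.sinh (u + v) - Complex.sinh (u - v)
        = 2 * Complex.cosh u * Complex.sinh v := by
      rw [Complex.sinh_add, Complex.sinh_sub]; ring
    rw [← h3, ← hau, ← hbu, h, sub_self]
  have hπ := Real.pi_pos
  rcases mul_eq_zero.mp key with h' | hsv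
  · rcases mul_eq_zero.mp h' with h2 | hcu
    · norm_num at h2
    · -- cosh u = 0 : b = πI - a
      right
      have huim' : u.im = (a.im + b.im) / 2 := by
        have := congrArg Complex.im hu
        simpa using this
      have huim : 0 < u.im ∧ u.im < Real.pi := by
        rw [huim']; constructor <;> linarith
      have := strip_cosh_zero huim hcu
      have hab : a + b = (Real.pi : ℂ) * I := by
        have h4 : (a + b) / 2 = ((Real.pi / 2 : ℝ) : ℂ) * I := by rw [← hu, this]
        push_cast at h4
        linear_combination 2 * h4
      linear_combination hab
  · -- sinh v = 0 : a = b
    left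
    obtain ⟨k, hk⟩ := sinh_zero_int hsv
    have him : v.im = (k : ℝ) * Real.pi := by rw [hk]; simp
    have hvim : v.im = (a.im - b.im) / 2 := by rw [hv]; simp
    have hbd : |(k:ℝ) * Real.pi| < Real.pi := by
      rw [← him, hvim]
      rw [abs_lt]; constructor <;> linarith
    have hk0 : k = 0 := by
      by_contra hne
      have : (1:ℝ) ≤ |(k:ℝ)| := by
        have : (1:ℤ) ≤ |k| := Int.one_le_abs hne
        exact_mod_cast this
      rw [abs_mul, abs_of_pos hπ] at hbd
      nlinarith
    subst hk0
    simp at hk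
    have h5 : (a - b) / 2 = 0 := by rw [← hv, hk]
    linear_combination (-2 : ℂ) * h5

/-- surjectivity helper -/
lemma log_mem_and_sinh {z w : ℂ} (hw : 0 < w.im) (hq : w ^ 2 = 2 * z * w + 1) :
    Complex.log w ∈ strip ∧ Complex.sinh (Complex.log w) = z := by
  have hw0 : w ≠ 0 := by
    intro h; rw [h] at hw; simp at hw
  constructor
  · constructor
    · rw [Complex.log_im]
      rcases lt_or_eq_of_le (Complex.arg_nonneg_iff.mpr hw.le) with h | h
      · exact h
      · exfalso
        have := Complex.arg_eq_zero_iff.mp h.symm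
        exact hw.ne' this.2
    · rw [Complex.log_im]
      exact Complex.arg_lt_pi_iff.mpr (Or.inr hw.ne')
  · show (Complex.exp (Complex.log w) - Complex.exp (-Complex.log w)) / 2 = z
    rw [Complex.exp_neg, Complex.exp_log hw0]
    field_simp
    linear_combination hq

lemma sinh_surj {z : ℂ} (hz : 0 < z.im) : ∃ ζ ∈ strip, Complex.sinh ζ = z := by
  obtain ⟨c, hc⟩ := IsAlgClosed.exists_pow_nat_eq (z ^ 2 + 1) (n := 2) (by norm_num)
  by_cases hp : 0 < (z + c).im
  · refine ⟨Complex.log (z + c), ?_, ?_⟩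
    · exact (log_mem_and_sinh hp (by linear_combination hc)).1
    · exact (log_mem_and_sinh hp (by linear_combination hc)).2
  · have hm : 0 < (z - c).im := by
      have h1 : (z + c).im + (z - c).im = 2 * z.im := by
        simp [Complex.add_im, Complex.sub_im]; ring
      have := not_lt.mp hp
      linarith
    refine ⟨Complex.log (z - c), ?_, ?_⟩
    · exact (log_mem_and_sinh hm (by linear_combination hc)).1
    · exact (log_mem_and_sinh hm (by linear_combination hc)).2

lemma abs_le_abs_sinh (x : ℝ) : |x| ≤ |Real.sinh x| := by
  have key : ∀ y : ℝ, 0 ≤ y → |y| ≤ |Real.sinh y| := by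
    intro y hy
    rw [_root_.abs_of_nonneg hy, _root_.abs_of_nonneg (Real.sinh_nonneg_iff.mpr hy)]
    exact Real.self_le_sinh_iff.mpr hy
  rcases le_or_gt 0 x with h | h
  · exact key x h
  · have h2 := key (-x) (by linarith)
    rwa [Real.sinh_neg, abs_neg, abs_neg] at h2

lemma sq_abs_sinh (u : ℂ) :
    (‖Complex.sinh u‖) ^ 2 = Real.sinh u.re ^ 2 + Real.sin u.im ^ 2 := by
  have h1 : Complex.sinh u
      = (Real.sinh u.re * Real.cos u.im : ℝ) + (Real.cosh u.re * Real.sin u.im : ℝ) * I := by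
    conv_lhs => rw [← Complex.re_add_im u]
    rw [Complex.sinh_add, Complex.sinh_mul_I, Complex.cosh_mul_I]
    push_cast
    rw [← Complex.ofReal_sinh, ← Complex.ofReal_cosh, ← Complex.ofReal_sin, ← Complex.ofReal_cos]
    ring
  rw [h1, Complex.sq_norm, Complex.normSq_add_mul_I]
  have h2 := Real.sin_sq_add_cos_sq u.im
  have h3 := Real.cosh_sq u.re
  nlinarith [h2, h3]

/-- quantitative bound: preimages of points near i are near iπ/2 -/
lemma preimage_close {ζ z : ℂ} (hζ : ζ ∈ strip) (hs : Complex.sinh ζ = z) :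
    ‖ζ - ((Real.pi / 2 : ℝ) : ℂ) * I‖
      ≤ (2 + Real.pi) * Real.sqrt (‖z - I‖) := by
  have hπ := Real.pi_pos
  set u := (ζ - ((Real.pi / 2 : ℝ) : ℂ) * I) / 2 with hu
  have hζu : ζ = 2 * u + ((Real.pi / 2 : ℝ) : ℂ) * I := by rw [hu]; ring
  -- z - I = 2 * sinh(u)^2 * I
  have hzi : z - I = 2 * Complex.sinh u ^ 2 * I := by
    rw [← hs, hζu, Complex.sinh_add, Complex.sinh_mul_I, Complex.cosh_mul_I]
    rw [← Complex.ofReal_sin, ← Complex.ofReal_cos, Real.sin_pi_div_two, Real.cos_pi_div_two]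
    rw [Complex.cosh_two_mul]
    have := Complex.cosh_sq u
    push_cast
    linear_combination Complex.I * this
  have habs : ‖Complex.sinh u‖ ^ 2 = ‖z - I‖ / 2 := by
    have h9 : ‖z - I‖ = 2 * ‖Complex.sinh u‖ ^ 2 := by
      rw [hzi, norm_mul, norm_mul, Complex.norm_I, norm_pow, mul_one, Complex.norm_two]
    rw [h9]; ring
  have hsq := sq_abs_sinh u
  set A := ‖z - I‖ with hA
  have hA0 : 0 ≤ A := norm_nonneg _
  have hre : Real.sinh u.re ^ 2 ≤ A / 2 := by nlinarith [sq_nonneg (Real.sin u.im)]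
  have him : Real.sin u.im ^ 2 ≤ A / 2 := by nlinarith [sq_nonneg (Real.sinh u.re)]
  -- |u.re| ≤ sqrt (A/2)
  have hre2 : |u.re| ≤ Real.sqrt (A / 2) := by
    have h1 : |Real.sinh u.re| ≤ Real.sqrt (A / 2) := by
      rw [← Real.sqrt_sq_eq_abs]
      exact Real.sqrt_le_sqrt hre
    exact (abs_le_abs_sinh u.re).trans h1
  -- |u.im| ≤ (π/2) sqrt (A/2)
  have huim : |u.im| ≤ Real.pi / 4 := by
    have h1 : u.im = (ζ.im - Real.pi / 2) / 2 := by rw [hu]; simp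
    obtain ⟨h2, h3⟩ := hζ
    rw [h1, abs_le]; constructor <;> [linarith; linarith]
  have him2 : |u.im| ≤ (Real.pi / 2) * Real.sqrt (A / 2) := by
    have hj : 2 / Real.pi * |u.im| ≤ |Real.sin u.im| :=
      Real.mul_abs_le_abs_sin (by linarith)
    have h1 : |Real.sin u.im| ≤ Real.sqrt (A / 2) := by
      rw [← Real.sqrt_sq_eq_abs]
      exact Real.sqrt_le_sqrt him
    have h2 : 2 / Real.pi * |u.im| ≤ Real.sqrt (A / 2) := hj.trans h1
    calc |u.im| = (Real.pi / 2) * (2 / Real.pi * |u.im|) := by field_simp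
      _ ≤ (Real.pi / 2) * Real.sqrt (A / 2) := by
          apply mul_le_mul_of_nonneg_left h2; positivity
  have hfin : ‖ζ - ((Real.pi / 2 : ℝ) : ℂ) * I‖
      = 2 * ‖u‖ := by
    have h9 : ζ - ((Real.pi / 2 : ℝ) : ℂ) * I = 2 * u := by rw [hu]; ring
    rw [h9, norm_mul, Complex.norm_two]
  rw [hfin]
  have h6 : ‖u‖ ≤ |u.re| + |u.im| := Complex.norm_le_abs_re_add_abs_im u
  have h7 : Real.sqrt (A / 2) ≤ Real.sqrt A := Real.sqrt_le_sqrt (by linarith)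
  have h8 : 0 ≤ Real.sqrt (A / 2) := Real.sqrt_nonneg _
  calc 2 * ‖u‖ ≤ 2 * (|u.re| + |u.im|) := by linarith
    _ ≤ 2 * (Real.sqrt (A / 2) + (Real.pi / 2) * Real.sqrt (A / 2)) := by linarith
    _ = (2 + Real.pi) * Real.sqrt (A / 2) := by ring
    _ ≤ (2 + Real.pi) * Real.sqrt A := by nlinarith

open Classical in
/-- the chosen preimage -/
def psi (z : ℂ) : ℂ :=
  if h : ∃ ζ, ζ ∈ strip ∧ Complex.sinh ζ = z then h.choose
  else ((Real.pi / 2 : ℝ) : ℂ) * I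

lemma psi_spec {z : ℂ} (h : ∃ ζ, ζ ∈ strip ∧ Complex.sinh ζ = z) :
    psi z ∈ strip ∧ Complex.sinh (psi z) = z := by
  rw [psi, dif_pos h]
  exact h.choose_spec

lemma psi_of_not {z : ℂ} (h : ¬ ∃ ζ, ζ ∈ strip ∧ Complex.sinh ζ = z) :
    psi z = ((Real.pi / 2 : ℝ) : ℂ) * I := by
  rw [psi, dif_neg h]

lemma half_pi_mem : ((Real.pi / 2 : ℝ) : ℂ) * I ∈ strip := by
  have hπ := Real.pi_pos
  constructor <;> simp [Complex.mul_I_im] <;> linarith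

lemma sinh_half_pi : Complex.sinh (((Real.pi / 2 : ℝ) : ℂ) * I) = I := by
  rw [Complex.sinh_mul_I, ← Complex.ofReal_sin, Real.sin_pi_div_two]
  simp

end
end CrossingAux
/-- A crossing-symmetric holomorphic function on the strip S(0,π) factors
through sinh via a function holomorphic on the upper half plane. -/
theorem crossing_symmetric_factors_through_sinh (S : ℂ → ℂ)
    (hS : DifferentiableOn ℂ S {ζ : ℂ | 0 < ζ.im ∧ ζ.im < Real.pi})
    (hcross : ∀ ζ ∈ {ζ : ℂ | 0 < ζ.im ∧ ζ.im < Real.pi},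
      S (Real.pi * Complex.I - ζ) = S ζ) :
    ∃ φ : ℂ → ℂ, DifferentiableOn ℂ φ {z : ℂ | 0 < z.im} ∧
      ∀ ζ ∈ {ζ : ℂ | 0 < ζ.im ∧ ζ.im < Real.pi},
        φ (Complex.sinh ζ) = S ζ := by
  have hSs : DifferentiableOn ℂ S CrossingAux.strip := hS
  have val : ∀ {z ζ : ℂ}, ζ ∈ CrossingAux.strip → Complex.sinh ζ = z →
      S (CrossingAux.psi z) = S ζ := by
    intro z ζ hζ hsz
    obtain ⟨hmem, hsinh⟩ := CrossingAux.psi_spec ⟨ζ, hζ, hsz⟩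
    rcases CrossingAux.sinh_fiber hζ hmem (by rw [hsz, hsinh]) with h | h
    · rw [h]
    · rw [h]
      exact hcross ζ hζ
  refine ⟨S ∘ CrossingAux.psi, ?_, fun ζ hζ => val hζ rfl⟩
  have hImem : Complex.I ∈ {z : ℂ | 0 < z.im} := by simp [Set.mem_setOf_eq]
  rw [← Complex.differentiableOn_compl_singleton_and_continuousAt_iff
      (CrossingAux.isOpen_upper.mem_nhds hImem)]
  constructor
  · -- differentiable away from i
    intro z hz
    obtain ⟨hz0, hzi⟩ := hz
    have hzI : z ≠ Complex.I := hzi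
    obtain ⟨ζ₀, hζ₀, hs₀⟩ := CrossingAux.sinh_surj hz0
    have hcosh : Complex.cosh ζ₀ ≠ 0 := by
      intro h
      have h2 := CrossingAux.strip_cosh_zero hζ₀ h
      rw [h2, CrossingAux.sinh_half_pi] at hs₀
      exact hzI hs₀.symm
    have hsd := Complex.hasStrictDerivAt_sinh ζ₀
    have hfd := hsd.hasStrictFDerivAt_equiv hcosh
    set inv : ℂ → ℂ := hfd.localInverse _ _ _ with hinvdef
    have hright : ∀ᶠ y in 𝓝 (Complex.sinh ζ₀), Complex.sinh (inv y) = y :=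
      hfd.eventually_right_inverse
    have htendinv : Tendsto inv (𝓝 (Complex.sinh ζ₀)) (𝓝 ζ₀) :=
      hfd.localInverse_tendsto
    have hstrip : ∀ᶠ y in 𝓝 (Complex.sinh ζ₀), inv y ∈ CrossingAux.strip :=
      htendinv (CrossingAux.isOpen_strip.mem_nhds hζ₀)
    have hSat : DifferentiableAt ℂ S ζ₀ :=
      hSs.differentiableAt (CrossingAux.isOpen_strip.mem_nhds hζ₀)
    have hcomp : DifferentiableAt ℂ (S ∘ inv) (Complex.sinh ζ₀) := by
      have happ : inv (Complex.sinh ζ₀) = ζ₀ := hfd.localInverse_apply_image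
      have h6 : DifferentiableAt ℂ S (inv (Complex.sinh ζ₀)) := by
        rw [happ]; exact hSat
      exact h6.comp _ hfd.to_localInverse.differentiableAt
    have hev : (S ∘ CrossingAux.psi) =ᶠ[𝓝 (Complex.sinh ζ₀)] (S ∘ inv) := by
      filter_upwards [hright, hstrip] with y h1 h2
      exact val h2 h1
    have : DifferentiableAt ℂ (S ∘ CrossingAux.psi) (Complex.sinh ζ₀) :=
      hcomp.congr_of_eventuallyEq hev
    rw [hs₀] at this
    exact this.differentiableWithinAt
  · -- continuity at i
    have hπ := Real.pi_pos
    have hScont : ContinuousAt S (((Real.pi/2:ℝ):ℂ) * Complex.I) :=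
      (hSs.differentiableAt
        (CrossingAux.isOpen_strip.mem_nhds CrossingAux.half_pi_mem)).continuousAt
    have hpsiI : S (CrossingAux.psi Complex.I) = S (((Real.pi/2:ℝ):ℂ) * Complex.I) :=
      val CrossingAux.half_pi_mem CrossingAux.sinh_half_pi
    have htend : Tendsto CrossingAux.psi (𝓝 Complex.I)
        (𝓝 (((Real.pi/2:ℝ):ℂ) * Complex.I)) := by
      rw [Metric.tendsto_nhds_nhds]
      intro ε hε
      refine ⟨(ε / (2 + Real.pi))^2, by positivity, fun {z} hz => ?_⟩
      by_cases h : ∃ ζ, ζ ∈ CrossingAux.strip ∧ Complex.sinh ζ = z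
      · obtain ⟨hm, hsz⟩ := CrossingAux.psi_spec h
        have hb := CrossingAux.preimage_close hm hsz
        have habs : ‖z - Complex.I‖ < (ε / (2 + Real.pi))^2 := by
          rwa [Complex.dist_eq] at hz
        have h1 : Real.sqrt (‖z - Complex.I‖) < ε / (2 + Real.pi) := by
          have h3 := Real.sqrt_lt_sqrt (norm_nonneg _) habs
          rwa [Real.sqrt_sq (by positivity)] at h3
        rw [Complex.dist_eq]
        calc ‖CrossingAux.psi z - ((Real.pi/2:ℝ):ℂ) * Complex.I‖
            ≤ (2 + Real.pi) * Real.sqrt (‖z - Complex.I‖) := hb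
          _ < (2 + Real.pi) * (ε / (2 + Real.pi)) :=
              mul_lt_mul_of_pos_left h1 (by linarith)
          _ = ε := by field_simp
      · rw [CrossingAux.psi_of_not h]
        simpa using hε
    have hfinal : ContinuousAt (S ∘ CrossingAux.psi) Complex.I := by
      have h4 := hScont.tendsto.comp htend
      rw [ContinuousAt]
      have h5 : (S ∘ CrossingAux.psi) Complex.I = S (((Real.pi/2:ℝ):ℂ) * Complex.I) := hpsiI
      rw [h5]
      exact h4
    exact hfinal
end

section
/- Let m > 0 and let N ⊆ ℝ be a Lebesgue-null set. Then the set {(p,q) ∈ ℝ² : (1/2)(ω_m(q)·p − ω_m(p)·q) ∈ N} is a Lebesgue-null subset of ℝ², where ω_m(p) := √(m² + p²). -/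
open MeasureTheory

lemma preimage_null_of_deriv_aux (f f' : ℝ → ℝ)
    (hd : ∀ x, HasDerivAt f (f' x) x)
    (hinj : Function.Injective f)
    (hne : ∀ x, f' x ≠ 0)
    (hmeas : Measurable f')
    (N : Set ℝ) (hNm : MeasurableSet N) (hN : volume N = 0) :
    volume (f ⁻¹' N) = 0 := by
  have hfc : Continuous f := by
    have : Differentiable ℝ f := fun x => (hd x).differentiableAt
    exact this.continuous
  set s : Set ℝ := f ⁻¹' N with hs
  have hsm : MeasurableSet s := hfc.measurable hNm
  have himg : volume (f '' s) = 0 :=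
    measure_mono_null (Set.image_preimage_subset f N) hN
  have hcov : volume (f '' s) = ∫⁻ x in s, ENNReal.ofReal |f' x| := by
    have := MeasureTheory.lintegral_image_eq_lintegral_abs_det_fderiv_mul volume hsm
      (fun x _ => ((hd x).hasFDerivAt.hasFDerivWithinAt))
      (hinj.injOn) (fun _ => (1 : ENNReal))
    simpa [ContinuousLinearMap.det_toSpanSingleton] using this
  have hzero : ∫⁻ x in s, ENNReal.ofReal |f' x| = 0 := hcov ▸ himg
  have hμs : (volume.restrict s) {x | ENNReal.ofReal |f' x| ≠ 0} = 0 := by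
    have hmm : Measurable fun x => ENNReal.ofReal |f' x| :=
      (hmeas.abs).ennreal_ofReal
    have := (lintegral_eq_zero_iff hmm).mp hzero
    simpa [Filter.EventuallyEq, ae_iff] using this
  have huniv : {x : ℝ | ENNReal.ofReal |f' x| ≠ 0} = Set.univ := by
    ext x
    simp only [Set.mem_setOf_eq, Set.mem_univ, iff_true, ne_eq,
      ENNReal.ofReal_eq_zero, not_le]
    exact abs_pos.mpr (hne x)
  rw [huniv] at hμs
  rwa [Measure.restrict_apply_univ] at hμs

lemma wedge_key_ineq (m p q : ℝ) (hm : 0 < m) :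
    p * q < Real.sqrt (m^2 + p^2) * Real.sqrt (m^2 + q^2) := by
  have h1 : (0:ℝ) ≤ m^2 + p^2 := by positivity
  have h2 : (0:ℝ) ≤ m^2 + q^2 := by positivity
  have ha : Real.sqrt (m^2+p^2) ^ 2 = m^2 + p^2 := Real.sq_sqrt h1
  have hb : Real.sqrt (m^2+q^2) ^ 2 = m^2 + q^2 := Real.sq_sqrt h2
  have ha0 : 0 < Real.sqrt (m^2+p^2) := Real.sqrt_pos.mpr (by positivity)
  have hb0 : 0 < Real.sqrt (m^2+q^2) := Real.sqrt_pos.mpr (by positivity)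
  nlinarith [mul_pos ha0 hb0, sq_nonneg (p-q), sq_nonneg (p+q), sq_nonneg m,
    sq_nonneg (Real.sqrt (m^2+p^2) * Real.sqrt (m^2+q^2) + p*q), mul_pos hm hm]

lemma hasDerivAt_wedge (m p B : ℝ) (hm : 0 < m) (q : ℝ) :
    HasDerivAt (fun q : ℝ => (1/2 : ℝ) * (Real.sqrt (m^2 + q^2) * p - B * q))
      ((1/2 : ℝ) * (q * p / Real.sqrt (m^2 + q^2) - B)) q := by
  have hpos : (0:ℝ) < m^2 + q^2 := by positivity
  have hsn : Real.sqrt (m^2+q^2) ≠ 0 := by positivity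
  have h1 : HasDerivAt (fun q : ℝ => m^2 + q^2) (2*q) q := by
    simpa using ((hasDerivAt_pow 2 q).const_add (m^2))
  have hsq : HasDerivAt (fun q : ℝ => Real.sqrt (m^2 + q^2))
      (q / Real.sqrt (m^2 + q^2)) q := by
    have := (Real.hasDerivAt_sqrt hpos.ne').comp q h1
    refine HasDerivAt.congr_deriv (by exact this) ?_
    field_simp
  have := ((hsq.mul_const p).sub ((hasDerivAt_id q).const_mul B)).const_mul (1/2 : ℝ)
  refine HasDerivAt.congr_deriv (by exact this) ?_
  ring

/-- For m > 0, the preimage of a Lebesgue-null set under the map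
`(p,q) ↦ (1/2)(ω_m(q)p − ω_m(p)q)` is a Lebesgue-null subset of ℝ². -/
theorem null_preimage_wedge_map (m : ℝ) (hm : 0 < m)
    (N : Set ℝ) (hN : volume N = 0) :
    volume {x : ℝ × ℝ |
      (1/2 : ℝ) * (Real.sqrt (m^2 + x.2^2) * x.1
        - Real.sqrt (m^2 + x.1^2) * x.2) ∈ N} = 0 := by
  obtain ⟨N', hNN', hN'm, hN'⟩ := exists_measurable_superset_of_null hN
  apply measure_mono_null (fun x hx => hNN' hx : {x : ℝ × ℝ |
      (1/2 : ℝ) * (Real.sqrt (m^2 + x.2^2) * x.1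
        - Real.sqrt (m^2 + x.1^2) * x.2) ∈ N} ⊆ {x : ℝ × ℝ |
      (1/2 : ℝ) * (Real.sqrt (m^2 + x.2^2) * x.1
        - Real.sqrt (m^2 + x.1^2) * x.2) ∈ N'})
  have hφc : Continuous fun x : ℝ × ℝ =>
      (1/2 : ℝ) * (Real.sqrt (m^2 + x.2^2) * x.1 - Real.sqrt (m^2 + x.1^2) * x.2) := by
    fun_prop
  have hTm : MeasurableSet {x : ℝ × ℝ |
      (1/2 : ℝ) * (Real.sqrt (m^2 + x.2^2) * x.1
        - Real.sqrt (m^2 + x.1^2) * x.2) ∈ N'} := hφc.measurable hN'm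
  rw [Measure.volume_eq_prod ℝ ℝ]
  refine (Measure.measure_prod_null hTm).mpr ?_
  refine Filter.Eventually.of_forall fun p => ?_
  set B := Real.sqrt (m^2 + p^2) with hB
  have hB0 : 0 < B := Real.sqrt_pos.mpr (by positivity)
  set f : ℝ → ℝ := fun q => (1/2 : ℝ) * (Real.sqrt (m^2 + q^2) * p - B * q) with hf
  set f' : ℝ → ℝ := fun q => (1/2 : ℝ) * (q * p / Real.sqrt (m^2 + q^2) - B) with hf'
  have hd : ∀ q, HasDerivAt f (f' q) q := fun q => hasDerivAt_wedge m p B hm q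
  have hneg : ∀ q, f' q < 0 := by
    intro q
    have hq0 : 0 < Real.sqrt (m^2 + q^2) := Real.sqrt_pos.mpr (by positivity)
    have key : q * p < B * Real.sqrt (m^2 + q^2) := by
      have := wedge_key_ineq m q p hm
      nlinarith [this]
    have : q * p / Real.sqrt (m^2 + q^2) < B := by
      rw [div_lt_iff₀ hq0]; linarith [key]
    simp only [hf']
    nlinarith
  have hanti : StrictAnti f := strictAnti_of_deriv_neg (fun q => by
    rw [(hd q).deriv]; exact hneg q)
  have hmeas : Measurable f' := by
    have : Continuous f' := by
      apply Continuous.mul continuous_const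
      apply Continuous.sub _ continuous_const
      exact (continuous_id.mul continuous_const).div
        (Real.continuous_sqrt.comp (by continuity)) (fun q => by positivity)
    exact this.measurable
  have := preimage_null_of_deriv_aux f f' hd hanti.injective
    (fun q => (hneg q).ne) hmeas N' hN'm hN'
  exact this
end

section
/- Let R : ℝ → ℂ be any function and define R₀⁺ : ℝ² → ℂ by R₀⁺(p,q) := R(−pq) if p > 0 and q < 0, and R₀⁺(p,q) := 1 otherwise. Let ψ, φ : ℝ → ℂ satisfy ψ(p) = 0 for all p ≤ 0 and φ(p) = 0 for all p ≥ 0. Then for every n ∈ ℕ and all p₁, …, pₙ ∈ ℝ: ∑_{k=0}^{n} (k!·(n−k)!)⁻¹ · ∑_{π ∈ S_n} ( ∏_{1 ≤ i ≤ k < j ≤ n} R₀⁺(p_{π(i)}, p_{π(j)}) ) · ∏_{i=1}^{k} ψ(p_{π(i)}) · ∏_{j=k+1}^{n} φ(p_{π(j)}) = ( ∏_{i=1}^{n} ∏_{j=1}^{n} R₀⁺(p_i, p_j) ) · ∏_{i=1}^{n} ( ψ(p_i) + φ(p_i) ), where S_n denotes the symmetric group on n letters. -/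
open Finset

section ChiralAux

variable {n : ℕ}

private lemma image_eq_iff_mem (π : Equiv.Perm (Fin n)) {A S : Finset (Fin n)}
    (h : A.image π = S) : ∀ x, x ∈ A ↔ π x ∈ S := by
  intro x
  constructor
  · intro hx; rw [← h]; exact Finset.mem_image_of_mem _ hx
  · intro hx; rw [← h] at hx
    obtain ⟨a, ha, hax⟩ := Finset.mem_image.mp hx
    rwa [← π.injective hax]

private lemma image_eq_of_iff (π : Equiv.Perm (Fin n)) {A S : Finset (Fin n)}
    (h : ∀ x, x ∈ A ↔ π x ∈ S) : A.image π = S := by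
  ext y
  simp only [Finset.mem_image]
  constructor
  · rintro ⟨a, ha, rfl⟩; exact (h a).mp ha
  · intro hy
    exact ⟨π.symm y, (h _).mpr (by simpa using hy), by simp⟩

private lemma A_card {k : ℕ} (hk : k ≤ n) :
    (univ.filter (fun i : Fin n => i.val < k)).card = k := by
  have hlt : ∀ m ∈ Finset.range k, m < n := fun m hm =>
    lt_of_lt_of_le (Finset.mem_range.mp hm) hk
  have : univ.filter (fun i : Fin n => i.val < k)
      = Finset.attachFin (Finset.range k) hlt := by
    ext a
    simp [Finset.mem_attachFin]
  rw [this, Finset.card_attachFin, Finset.card_range]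

private lemma B_eq_compl (k : ℕ) :
    univ.filter (fun i : Fin n => k ≤ i.val)
      = (univ.filter (fun i : Fin n => i.val < k))ᶜ := by
  ext a
  simp [not_lt]

/-- The number of permutations mapping a fixed `k`-set onto a fixed `k`-set. -/
private lemma fiber_card {k : ℕ} (A S : Finset (Fin n)) (hA : A.card = k)
    (hS : S.card = k) :
    (univ.filter (fun π : Equiv.Perm (Fin n) => A.image ⇑π = S)).card
      = Nat.factorial k * Nat.factorial (n - k) := by
  classical
  rw [← Fintype.card_subtype]
  have hcA : Fintype.card {x : Fin n // x ∈ A} = k := by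
    simpa using hA
  have hcS : Fintype.card {x : Fin n // x ∈ S} = k := by
    simpa using hS
  have hcA' : Fintype.card {x : Fin n // x ∉ A} = n - k := by
    rw [Fintype.card_subtype_compl]
    simp [hcA]
  have hcS' : Fintype.card {x : Fin n // x ∉ S} = n - k := by
    rw [Fintype.card_subtype_compl]
    simp [hcS]
  -- the bijection from the fiber to pairs of bijections
  let Ψ : {π : Equiv.Perm (Fin n) // A.image ⇑π = S} →
      ({x : Fin n // x ∈ A} ≃ {x : Fin n // x ∈ S}) ×
        ({x : Fin n // x ∉ A} ≃ {x : Fin n // x ∉ S}) :=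
    fun π => ⟨π.1.subtypeEquiv (image_eq_iff_mem π.1 π.2),
      π.1.subtypeEquiv
        (fun x => not_iff_not.mpr (image_eq_iff_mem π.1 π.2 x))⟩
  have hbij : Function.Bijective Ψ := by
    constructor
    · rintro ⟨π, hπ⟩ ⟨π', hπ'⟩ h
      have h1 := congrArg Prod.fst h
      have h2 := congrArg Prod.snd h
      refine Subtype.ext (Equiv.ext fun x => ?_)
      by_cases hx : x ∈ A
      · have := congrArg (fun e => ((e ⟨x, hx⟩ : {x : Fin n // x ∈ S}) : Fin n)) h1
        simpa [Ψ] using this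
      · have := congrArg (fun e => ((e ⟨x, hx⟩ : {x : Fin n // x ∉ S}) : Fin n)) h2
        simpa [Ψ] using this
    · rintro ⟨e, f⟩
      let σ : Equiv.Perm (Fin n) := Equiv.subtypeCongr e f
      have hσ_pos : ∀ x (hx : x ∈ A), σ x = (e ⟨x, hx⟩ : Fin n) := by
        intro x hx
        simp [σ, Equiv.subtypeCongr, Equiv.sumCompl_symm_apply_of_pos hx]
      have hσ_neg : ∀ x (hx : x ∉ A), σ x = (f ⟨x, hx⟩ : Fin n) := by
        intro x hx
        simp [σ, Equiv.subtypeCongr, Equiv.sumCompl_symm_apply_of_neg hx]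
      have himg : A.image ⇑σ = S := by
        apply image_eq_of_iff
        intro x
        constructor
        · intro hx; rw [hσ_pos x hx]; exact (e ⟨x, hx⟩).2
        · intro hx
          by_contra hna
          rw [hσ_neg x hna] at hx
          exact (f ⟨x, hna⟩).2 hx
      refine ⟨⟨σ, himg⟩, ?_⟩
      have he : (Ψ ⟨σ, himg⟩).1 = e := by
        ext x
        obtain ⟨x, hx⟩ := x
        simp [Ψ, hσ_pos x hx]
      have hf : (Ψ ⟨σ, himg⟩).2 = f := by
        ext x
        obtain ⟨x, hx⟩ := x
        simp [Ψ, hσ_neg x hx]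
      exact Prod.ext he hf
  rw [Fintype.card_of_bijective hbij, Fintype.card_prod,
    Fintype.card_equiv (Fintype.equivOfCardEq (hcA.trans hcS.symm)),
    Fintype.card_equiv (Fintype.equivOfCardEq (hcA'.trans hcS'.symm)),
    hcA, hcA']

/-- A single permutation term only depends on the image of `{i < k}`. -/
private lemma perm_term_eq {k : ℕ} (f : Fin n → Fin n → ℂ) (g h : Fin n → ℂ)
    {S : Finset (Fin n)} (π : Equiv.Perm (Fin n))
    (hπ : (univ.filter (fun i : Fin n => i.val < k)).image ⇑π = S) :
    (∏ ij ∈ univ.filter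
        (fun ij : Fin n × Fin n => ij.1.val < k ∧ k ≤ ij.2.val),
      f (π ij.1) (π ij.2))
      * (∏ i ∈ univ.filter (fun i : Fin n => i.val < k), g (π i))
      * (∏ j ∈ univ.filter (fun j : Fin n => k ≤ j.val), h (π j))
    = (∏ ab ∈ S ×ˢ Sᶜ, f ab.1 ab.2) * (∏ a ∈ S, g a) * (∏ b ∈ Sᶜ, h b) := by
  classical
  set A := univ.filter (fun i : Fin n => i.val < k) with hAdef
  set B := univ.filter (fun i : Fin n => k ≤ i.val) with hBdef
  have hmemA : ∀ x, x ∈ A ↔ π x ∈ S := image_eq_iff_mem π hπ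
  have hmemB : ∀ x, x ∈ B ↔ π x ∈ Sᶜ := by
    intro x
    rw [hBdef, B_eq_compl k, Finset.mem_compl, Finset.mem_compl, ← hAdef, hmemA]
  have hπB : B.image ⇑π = Sᶜ := image_eq_of_iff π hmemB
  have hinj : ∀ x ∈ A, ∀ y ∈ A, π x = π y → x = y := fun x _ y _ hxy =>
    π.injective hxy
  have hinjB : ∀ x ∈ B, ∀ y ∈ B, π x = π y → x = y := fun x _ y _ hxy =>
    π.injective hxy
  have hg : ∏ a ∈ S, g a = ∏ i ∈ A, g (π i) := by
    rw [← hπ, Finset.prod_image hinj]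
  have hh : ∏ b ∈ Sᶜ, h b = ∏ j ∈ B, h (π j) := by
    rw [← hπB, Finset.prod_image hinjB]
  have hpairs : univ.filter
      (fun ij : Fin n × Fin n => ij.1.val < k ∧ k ≤ ij.2.val) = A ×ˢ B := by
    ext ij
    simp [hAdef, hBdef, Finset.mem_product]
  have hF : ∏ ij ∈ A ×ˢ B, f (π ij.1) (π ij.2)
      = ∏ ab ∈ S ×ˢ Sᶜ, f ab.1 ab.2 := by
    refine Finset.prod_nbij' (fun ij => (π ij.1, π ij.2))
      (fun ab => (π.symm ab.1, π.symm ab.2)) ?_ ?_ ?_ ?_ ?_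
    · intro a ha
      rw [Finset.mem_product] at ha ⊢
      exact ⟨(hmemA a.1).mp ha.1, (hmemB a.2).mp ha.2⟩
    · intro a ha
      rw [Finset.mem_product] at ha ⊢
      constructor
      · rw [hmemA]; simpa using ha.1
      · rw [hmemB]; simpa using ha.2
    · intro a _; simp
    · intro a _; simp
    · intro a _; rfl
  rw [hpairs, hF, hg, hh]

end ChiralAux

/-- The n-particle component computation expressing `Ŝ_R = V S_R V*` as a
multiplication operator, for wave functions built from `ψ` supported on
positive momenta and `φ` supported on negative momenta. -/
theorem chiral_S_matrix_multiplication_identity (R : ℝ → ℂ)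
    (ψ φ : ℝ → ℂ)
    (hψ : ∀ p : ℝ, p ≤ 0 → ψ p = 0) (hφ : ∀ p : ℝ, 0 ≤ p → φ p = 0)
    (n : ℕ) (p : Fin n → ℝ) :
    ∑ k ∈ Finset.range (n + 1),
        ((Nat.factorial k * Nat.factorial (n - k) : ℕ) : ℂ)⁻¹ *
          ∑ π : Equiv.Perm (Fin n),
            (∏ ij ∈ univ.filter
                (fun ij : Fin n × Fin n => ij.1.val < k ∧ k ≤ ij.2.val),
              (if 0 < p (π ij.1) ∧ p (π ij.2) < 0
                then R (-(p (π ij.1) * p (π ij.2))) else 1))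
            * (∏ i ∈ univ.filter (fun i : Fin n => i.val < k), ψ (p (π i)))
            * (∏ j ∈ univ.filter (fun j : Fin n => k ≤ j.val), φ (p (π j)))
    = (∏ i : Fin n, ∏ j : Fin n,
        (if 0 < p i ∧ p j < 0 then R (-(p i * p j)) else 1))
      * ∏ i : Fin n, (ψ (p i) + φ (p i)) := by
  classical
  set R₀ : Fin n → Fin n → ℂ :=
    fun i j => if 0 < p i ∧ p j < 0 then R (-(p i * p j)) else 1 with hR₀
  set T : Finset (Fin n) → ℂ :=
    fun S => (∏ ab ∈ S ×ˢ Sᶜ, R₀ ab.1 ab.2) * (∏ a ∈ S, ψ (p a))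
      * (∏ b ∈ Sᶜ, φ (p b)) with hT
  -- Step 1: group the permutation sum by fibers
  have step1 : ∀ k ∈ Finset.range (n + 1),
      ((Nat.factorial k * Nat.factorial (n - k) : ℕ) : ℂ)⁻¹ *
          ∑ π : Equiv.Perm (Fin n),
            (∏ ij ∈ univ.filter
                (fun ij : Fin n × Fin n => ij.1.val < k ∧ k ≤ ij.2.val),
              R₀ (π ij.1) (π ij.2))
            * (∏ i ∈ univ.filter (fun i : Fin n => i.val < k), ψ (p (π i)))
            * (∏ j ∈ univ.filter (fun j : Fin n => k ≤ j.val), φ (p (π j)))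
      = ∑ S ∈ Finset.powersetCard k (univ : Finset (Fin n)), T S := by
    intro k hk
    have hkn : k ≤ n := Nat.lt_succ_iff.mp (Finset.mem_range.mp hk)
    set A := univ.filter (fun i : Fin n => i.val < k) with hAdef
    have hmaps : ∀ π ∈ (univ : Finset (Equiv.Perm (Fin n))),
        A.image ⇑π ∈ Finset.powersetCard k (univ : Finset (Fin n)) := by
      intro π _
      rw [Finset.mem_powersetCard_univ,
        Finset.card_image_of_injective _ π.injective]
      exact A_card hkn
    have hsum :
        ∑ π : Equiv.Perm (Fin n),
            (∏ ij ∈ univ.filter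
                (fun ij : Fin n × Fin n => ij.1.val < k ∧ k ≤ ij.2.val),
              R₀ (π ij.1) (π ij.2))
            * (∏ i ∈ A, ψ (p (π i)))
            * (∏ j ∈ univ.filter (fun j : Fin n => k ≤ j.val), φ (p (π j)))
        = ∑ S ∈ Finset.powersetCard k (univ : Finset (Fin n)),
            ∑ π ∈ univ.filter
                (fun π : Equiv.Perm (Fin n) => A.image ⇑π = S),
              (∏ ij ∈ univ.filter
                  (fun ij : Fin n × Fin n => ij.1.val < k ∧ k ≤ ij.2.val),
                R₀ (π ij.1) (π ij.2))
              * (∏ i ∈ A, ψ (p (π i)))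
              * (∏ j ∈ univ.filter (fun j : Fin n => k ≤ j.val), φ (p (π j))) :=
      (Finset.sum_fiberwise_of_maps_to hmaps _).symm
    rw [hsum]
    have hfib : ∀ S ∈ Finset.powersetCard k (univ : Finset (Fin n)),
        ∑ π ∈ univ.filter
            (fun π : Equiv.Perm (Fin n) => A.image ⇑π = S),
          (∏ ij ∈ univ.filter
              (fun ij : Fin n × Fin n => ij.1.val < k ∧ k ≤ ij.2.val),
            R₀ (π ij.1) (π ij.2))
          * (∏ i ∈ A, ψ (p (π i)))
          * (∏ j ∈ univ.filter (fun j : Fin n => k ≤ j.val), φ (p (π j)))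
        = ((Nat.factorial k * Nat.factorial (n - k) : ℕ) : ℂ) * T S := by
      intro S hS
      have hconst : ∀ π ∈ univ.filter
          (fun π : Equiv.Perm (Fin n) => A.image ⇑π = S),
          (∏ ij ∈ univ.filter
              (fun ij : Fin n × Fin n => ij.1.val < k ∧ k ≤ ij.2.val),
            R₀ (π ij.1) (π ij.2))
          * (∏ i ∈ A, ψ (p (π i)))
          * (∏ j ∈ univ.filter (fun j : Fin n => k ≤ j.val), φ (p (π j)))
          = T S := by
        intro π hπ
        exact perm_term_eq R₀ (fun a => ψ (p a)) (fun b => φ (p b)) π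
          ((Finset.mem_filter.mp hπ).2)
      rw [Finset.sum_congr rfl hconst, Finset.sum_const,
        fiber_card A S (A_card hkn) (Finset.mem_powersetCard_univ.mp hS),
        nsmul_eq_mul, Nat.cast_mul]
    rw [Finset.sum_congr rfl hfib, ← Finset.mul_sum, ← mul_assoc,
      inv_mul_cancel₀, one_mul]
    exact_mod_cast mul_ne_zero (Nat.factorial_ne_zero k)
      (Nat.factorial_ne_zero (n - k))
  -- Step 2: per-subset identity
  have step2 : ∀ S : Finset (Fin n),
      T S = (∏ i : Fin n, ∏ j : Fin n, R₀ i j)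
        * ((∏ a ∈ S, ψ (p a)) * ∏ b ∈ Sᶜ, φ (p b)) := by
    intro S
    by_cases hcase : (∀ a ∈ S, 0 < p a) ∧ ∀ b ∈ Sᶜ, p b < 0
    · have hRall : ∏ i : Fin n, ∏ j : Fin n, R₀ i j
          = ∏ ab ∈ S ×ˢ Sᶜ, R₀ ab.1 ab.2 := by
        rw [← Finset.prod_product']
        refine (Finset.prod_subset (Finset.subset_univ _) ?_).symm
        intro ab _ hab
        rw [Finset.mem_product] at hab
        push_neg at hab
        by_cases h1 : ab.1 ∈ S
        · have h2 : ab.2 ∈ S := by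
            by_contra h2
            exact (hab h1) (Finset.mem_compl.mpr h2)
          have : ¬ p ab.2 < 0 := not_lt.mpr (le_of_lt (hcase.1 _ h2))
          simp [hR₀, this]
        · have : ¬ 0 < p ab.1 :=
            not_lt.mpr (le_of_lt (hcase.2 _ (Finset.mem_compl.mpr h1)))
          simp [hR₀, this]
      rw [hT, hRall]
      exact mul_assoc _ _ _
    · rw [not_and_or] at hcase
      rcases hcase with hcase | hcase
      · push_neg at hcase
        obtain ⟨a, ha, hpa⟩ := hcase
        have hz : ∏ a ∈ S, ψ (p a) = 0 :=
          Finset.prod_eq_zero ha (hψ _ hpa)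
        simp [hT, hz]
      · push_neg at hcase
        obtain ⟨b, hb, hpb⟩ := hcase
        have hz : ∏ b ∈ Sᶜ, φ (p b) = 0 :=
          Finset.prod_eq_zero hb (hφ _ hpb)
        simp [hT, hz]
  -- Assemble
  rw [Finset.sum_congr rfl step1]
  have hpow : ∑ k ∈ Finset.range (n + 1),
      ∑ S ∈ Finset.powersetCard k (univ : Finset (Fin n)), T S
      = ∑ S ∈ (univ : Finset (Fin n)).powerset, T S := by
    rw [Finset.powerset_card_biUnion, Finset.sum_biUnion, Finset.card_univ,
      Fintype.card_fin]
    exact fun i _ j _ hij =>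
      Finset.pairwise_disjoint_powersetCard (univ : Finset (Fin n)) hij
  rw [hpow, Finset.prod_add, Finset.mul_sum]
  refine Finset.sum_congr rfl ?_
  intro S hS
  have hsd : (univ : Finset (Fin n)) \ S = Sᶜ :=
    (Finset.compl_eq_univ_sdiff S).symm
  rw [hsd, step2 S]
end

section
/- Let R : ℝ → ℂ satisfy conj(R(t)) = R(t)⁻¹ = R(−t) for all t ∈ ℝ. Define R₀⁺(p,q) := R(−pq) if p > 0 and q < 0, R₀⁺(p,q) := 1 otherwise; and define R₀(p,q) := R(−pq) if p > 0, q < 0, R₀(p,q) := R(pq) if p < 0, q > 0, and R₀(p,q) := 1 otherwise. Then for every n ∈ ℕ and p : Fin n → ℝ: (a) for every q > 0, ∏_{k} ( R₀⁺(q, p(k)) · R₀⁺(p(k), q) ) = ∏_{k} R₀(q, p(k)); and (b) for every q < 0, ∏_{k} conj( R₀⁺(q, p(k)) · R₀⁺(p(k), q) ) = ∏_{k} R₀(q, p(k)). -/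
open Finset

/-- Pointwise kernel computations proving `a_R(ψ) = Ŝ_R* a(ψ) Ŝ_R` for ψ
supported in positive momenta and `a_R(ψ) = Ŝ_R a(ψ) Ŝ_R*` for ψ supported in
negative momenta. -/
theorem kernel_identities_positive_negative_momentum (R : ℝ → ℂ)
    (hR : ∀ t : ℝ, (starRingEnd ℂ) (R t) = (R t)⁻¹ ∧ (R t)⁻¹ = R (-t))
    (n : ℕ) (p : Fin n → ℝ) :
    (∀ q : ℝ, 0 < q →
      ∏ k : Fin n,
          ((if 0 < q ∧ p k < 0 then R (-(q * p k)) else 1)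
            * (if 0 < p k ∧ q < 0 then R (-(p k * q)) else 1))
        = ∏ k : Fin n,
            (if 0 < q ∧ p k < 0 then R (-(q * p k))
              else if q < 0 ∧ 0 < p k then R (q * p k) else 1)) ∧
    (∀ q : ℝ, q < 0 →
      ∏ k : Fin n,
          (starRingEnd ℂ)
            ((if 0 < q ∧ p k < 0 then R (-(q * p k)) else 1)
              * (if 0 < p k ∧ q < 0 then R (-(p k * q)) else 1))
        = ∏ k : Fin n,
            (if 0 < q ∧ p k < 0 then R (-(q * p k))
              else if q < 0 ∧ 0 < p k then R (q * p k) else 1)) := by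
  constructor
  · intro q hq
    refine Finset.prod_congr rfl fun k _ => ?_
    have hnq : ¬ q < 0 := not_lt.mpr hq.le
    by_cases h : 0 < q ∧ p k < 0
    · simp [h, hnq]
    · simp [h, hnq]
  · intro q hq
    refine Finset.prod_congr rfl fun k _ => ?_
    have hnq : ¬ 0 < q := not_lt.mpr hq.le
    by_cases h : 0 < p k
    · have : (0 < q ∧ p k < 0) = False := by simp [hnq]
      simp only [this, if_false, hq, h, and_true, true_and, if_true, one_mul, if_pos]
      rw [(hR _).1, (hR _).2]
      ring_nf
    · have h2 : ¬ (q < 0 ∧ 0 < p k) := fun hc => h hc.2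
      simp [hnq, h, h2]
end
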